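/- For every integer k ≥ 3, every integer n ≥ 1, and every integer r ≥ 1, setting A = (1 + 1/(e·k)) · (k+1)^(−1/(k·n)), there exists a sequence X : Fin N → (Fin r → ZMod n) with N = ⌊(k·n/4)·A^r⌋ containing no zero-sum subsequence of length k·n; that is, s_{kn}(C_n^r) > (kn/4)·((1 + 1/(ek))·(k+1)^(−1/(kn)))^r. -/

import Mathlib

open Finset

private lemma sum_fn_prod {ι α : Type*} [Fintype ι] [DecidableEq ι] [Fintype α]
    (g : ι → α → ℝ) :
    ∑ f : ι → α, ∏ i, g i (f i) = ∏ i, ∑ a, g i a :=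
  (Fintype.prod_sum g).symm

private lemma pow_self_le_exp_factorial (t : ℕ) :
    (t : ℝ) ^ t ≤ Real.exp 1 ^ t * (t.factorial : ℝ) := by
  have h1 : ((t:ℝ)) ^ t / (t.factorial : ℝ) ≤ Real.exp t := by
    refine le_trans ?_ (Real.sum_le_exp_of_nonneg (by positivity) (t+1))
    refine Finset.single_le_sum (f := fun i => (t:ℝ)^i / (i.factorial : ℝ)) (fun i _ => by positivity) ?_
    simp
  have h2 : Real.exp (t : ℝ) = Real.exp 1 ^ t := by
    rw [← Real.exp_nat_mul]; simp
  have ht : (0:ℝ) < (t.factorial : ℝ) := by exact_mod_cast t.factorial_pos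
  rw [div_le_iff₀ ht] at h1
  calc (t:ℝ)^t ≤ Real.exp t * (t.factorial : ℝ) := h1
    _ = Real.exp 1 ^ t * (t.factorial : ℝ) := by rw [h2]

private lemma first_moment (n m r N : ℕ) [NeZero n]
    (p : ℝ) (hp0 : 0 ≤ p) (hp1 : p ≤ 1)
    (H : ∀ X : Fin N → Fin r → ZMod n,
      ∃ S : Finset (Fin N), S.card = m ∧ ∑ j ∈ S, X j = 0) :
    (1:ℝ) ≤ (N.choose m) *
      (∑ t ∈ Finset.range (m+1),
        if n ∣ t then (m.choose t : ℝ) * p^t * (1-p)^(m-t) else 0) ^ r := by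
  classical
  set q : ℝ := 1 - p with hq
  have hq0 : 0 ≤ q := by linarith
  set w : Bool → ℝ := fun b => if b then p else q with hw
  have hw0 : ∀ b, 0 ≤ w b := by intro b; cases b <;> simp [hw, hp0, hq0]
  have hwsum : ∑ b, w b = 1 := by simp [hw]; ring
  set z : Bool → ZMod n := fun b => if b then 1 else 0 with hz
  set W : (Fin N → Fin r → Bool) → ℝ := fun ω => ∏ j, ∏ i, w (ω j i) with hW
  have hW0 : ∀ ω, 0 ≤ W ω := fun ω => Finset.prod_nonneg fun j _ =>
    Finset.prod_nonneg fun i _ => hw0 _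
  have inner1 : ∑ v : Fin r → Bool, ∏ i, w (v i) = 1 := by
    rw [sum_fn_prod (fun _ a => w a)]
    have h : w true + w false = 1 := by simpa using hwsum
    simp [h]
  have step1 : ∑ ω : Fin N → Fin r → Bool, W ω = 1 := by
    rw [hW]
    rw [sum_fn_prod (fun (_ : Fin N) (v : Fin r → Bool) => ∏ i, w (v i))]
    simp [inner1]
  have hsum1 : ∀ (ι : Type) [Fintype ι] [DecidableEq ι],
      ∑ f : ι → Bool, ∏ i, w (f i) = 1 := by
    intro ι _ _
    rw [sum_fn_prod (fun _ a => w a)]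
    have h : w true + w false = 1 := by simpa using hwsum
    simp [h]
  set Q : ℝ := ∑ t ∈ Finset.range (m+1),
      if n ∣ t then (m.choose t : ℝ) * p^t * q^(m-t) else 0 with hQdef
  set χ : Finset (Fin N) → (Fin N → Fin r → Bool) → ℝ :=
    fun S ω => if (∑ j ∈ S, (fun i => z (ω j i))) = (0 : Fin r → ZMod n) then 1 else 0
    with hχ
  have step2 : ∀ S : Finset (Fin N), S.card = m →
      ∑ ω : Fin N → Fin r → Bool, W ω * χ S ω = Q ^ r := by
    intro S hS
    have hcond : ∀ ω : Fin N → Fin r → Bool,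
        χ S ω = ∏ i, (if (∑ j ∈ S, z (ω j i)) = 0 then (1:ℝ) else 0) := by
      intro ω
      simp only [hχ]
      by_cases h : (∑ j ∈ S, fun i => z (ω j i)) = (0 : Fin r → ZMod n)
      · rw [if_pos h]
        have hall : ∀ i, ∑ j ∈ S, z (ω j i) = 0 := by
          intro i
          have := congrFun h i
          simpa [Finset.sum_apply] using this
        rw [Finset.prod_congr rfl (fun i _ => by rw [if_pos (hall i)]),
          Finset.prod_const_one]
      · rw [if_neg h]
        have hex : ∃ i, ¬ (∑ j ∈ S, z (ω j i) = 0) := by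
          by_contra hc
          push_neg at hc
          exact h (funext fun i => by simpa [Finset.sum_apply] using hc i)
        obtain ⟨i0, hi0⟩ := hex
        symm
        apply Finset.prod_eq_zero (Finset.mem_univ i0)
        rw [if_neg hi0]
    have hsummand : ∀ ω : Fin N → Fin r → Bool,
        W ω * χ S ω = ∏ i, ((∏ j, w (ω j i)) *
          (if (∑ j ∈ S, z (ω j i)) = 0 then (1:ℝ) else 0)) := by
      intro ω
      rw [hcond ω]
      have hWc : W ω = ∏ i, ∏ j, w (ω j i) := Finset.prod_comm
      rw [hWc, ← Finset.prod_mul_distrib]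
    have htrans : ∑ ω : Fin N → Fin r → Bool, W ω * χ S ω
        = (∑ c : Fin N → Bool, (∏ j, w (c j)) *
            (if (∑ j ∈ S, z (c j)) = 0 then (1:ℝ) else 0)) ^ r := by
      rw [Finset.sum_congr rfl (fun ω _ => hsummand ω)]
      have e1 : (∑ ω : Fin N → Fin r → Bool, ∏ i, ((∏ j, w (ω j i)) *
            (if (∑ j ∈ S, z (ω j i)) = 0 then (1:ℝ) else 0)))
          = ∑ τ : Fin r → Fin N → Bool, ∏ i, ((∏ j, w (τ i j)) *
            (if (∑ j ∈ S, z (τ i j)) = 0 then (1:ℝ) else 0)) := by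
        rw [← Equiv.sum_comp (Equiv.piComm (fun (_ : Fin r) (_ : Fin N) => Bool))
          (fun ω => ∏ i, ((∏ j, w (ω j i)) *
            (if (∑ j ∈ S, z (ω j i)) = 0 then (1:ℝ) else 0)))]
        exact Finset.sum_congr rfl (fun τ _ => rfl)
      rw [e1]
      rw [sum_fn_prod (fun (_ : Fin r) (c : Fin N → Bool) =>
        (∏ j, w (c j)) * (if (∑ j ∈ S, z (c j)) = 0 then (1:ℝ) else 0))]
      rw [Finset.prod_const, Finset.card_univ, Fintype.card_fin]
    rw [htrans]
    congr 1
    -- reindex by finsets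
    have hG1 : ∑ c : Fin N → Bool, (∏ j, w (c j)) *
          (if (∑ j ∈ S, z (c j)) = 0 then (1:ℝ) else 0)
        = ∑ T : Finset (Fin N), p ^ T.card * q ^ (N - T.card) *
            (if (((S ∩ T).card : ZMod n) = 0) then (1:ℝ) else 0) := by
      refine Finset.sum_nbij'
        (i := fun c => Finset.univ.filter (fun u => c u = true))
        (j := fun T => fun u => decide (u ∈ T)) (fun _ _ => Finset.mem_univ _)
        (fun _ _ => Finset.mem_univ _) ?_ ?_ ?_
      · intro c _
        funext u
        by_cases h : c u = true <;> simp [h]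
      · intro T _
        ext u
        simp
      · intro c _
        set T := Finset.univ.filter (fun u => c u = true) with hT
        have h1 : ∏ j, w (c j) = p ^ T.card * q ^ (N - T.card) := by
          rw [← Finset.prod_mul_prod_compl T (fun j => w (c j))]
          have hA : ∏ j ∈ T, w (c j) = p ^ T.card := by
            rw [Finset.prod_congr rfl (fun u hu => ?_), Finset.prod_const]
            have hcu : c u = true := (Finset.mem_filter.1 hu).2
            simp [hw, hcu]
          have hB : ∏ j ∈ Tᶜ, w (c j) = q ^ (N - T.card) := by
            rw [Finset.prod_congr rfl (fun u hu => ?_), Finset.prod_const,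
              Finset.card_compl, Fintype.card_fin]
            have hcu : ¬ (c u = true) := by
              have := Finset.mem_compl.1 hu
              simpa [hT] using this
            simp [hw, hcu]
          rw [hA, hB]
        have h2 : (∑ j ∈ S, z (c j)) = (((S ∩ T).card : ℕ) : ZMod n) := by
          have : S ∩ T = S.filter (fun j => c j = true) := by
            ext a
            rw [hT]
            simp only [Finset.mem_inter, Finset.mem_filter, Finset.mem_univ, true_and]
          rw [this, hz]
          rw [Finset.sum_boole]
        rw [h1, h2]
    rw [hG1]
    -- split each T into its part in S and outside S
    have hsplit : ∑ T : Finset (Fin N), p ^ T.card * q ^ (N - T.card) *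
            (if (((S ∩ T).card : ZMod n) = 0) then (1:ℝ) else 0)
        = ∑ AB ∈ S.powerset ×ˢ Sᶜ.powerset,
            (p ^ AB.1.card * q ^ (m - AB.1.card) *
              (if ((AB.1.card : ZMod n) = 0) then (1:ℝ) else 0)) *
            (p ^ AB.2.card * q ^ ((N - m) - AB.2.card)) := by
      have hSm : S.card = m := hS
      have hScm : Sᶜ.card = N - m := by
        rw [Finset.card_compl, Fintype.card_fin, hSm]
      refine Finset.sum_nbij' (i := fun T => (T ∩ S, T \ S))
        (j := fun AB => AB.1 ∪ AB.2) ?_ (fun _ _ => Finset.mem_univ _) ?_ ?_ ?_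
      · intro T _
        rw [Finset.mem_product]
        constructor
        · exact Finset.mem_powerset.2 Finset.inter_subset_right
        · refine Finset.mem_powerset.2 ?_
          intro a ha
          rw [Finset.mem_compl]
          exact (Finset.mem_sdiff.1 ha).2
      · intro T _
        ext a
        simp only [Finset.mem_union, Finset.mem_inter, Finset.mem_sdiff]
        tauto
      · intro AB hAB
        rw [Finset.mem_product] at hAB
        have hA := Finset.mem_powerset.1 hAB.1
        have hB := Finset.mem_powerset.1 hAB.2
        have : (AB.1 ∪ AB.2) ∩ S = AB.1 ∧ (AB.1 ∪ AB.2) \ S = AB.2 := by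
          constructor
          · ext a
            simp only [Finset.mem_inter, Finset.mem_union]
            constructor
            · rintro ⟨h1 | h1, h2⟩
              · exact h1
              · exact absurd h2 (Finset.mem_compl.1 (hB h1))
            · intro h
              exact ⟨Or.inl h, hA h⟩
          · ext a
            simp only [Finset.mem_sdiff, Finset.mem_union]
            constructor
            · rintro ⟨h1 | h1, h2⟩
              · exact absurd (hA h1) h2
              · exact h1
            · intro h
              exact ⟨Or.inr h, Finset.mem_compl.1 (hB h)⟩
        rw [Prod.ext_iff]
        exact this
      · intro T _
        have hdisj : #(T ∩ S) + #(T \ S) = #T := Finset.card_inter_add_card_sdiff T S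
        have hc1 : #(T ∩ S) ≤ m := by
          calc #(T ∩ S) ≤ #S := Finset.card_le_card Finset.inter_subset_right
            _ = m := hS
        have hc2 : #(T \ S) ≤ N - m := by
          have hsub : T \ S ⊆ Sᶜ := by
            intro a ha
            rw [Finset.mem_compl]
            exact (Finset.mem_sdiff.1 ha).2
          calc #(T \ S) ≤ #Sᶜ := Finset.card_le_card hsub
            _ = N - m := hScm
        have hmN : m ≤ N := by
          calc m = #S := hS.symm
            _ ≤ N := by
              have := Finset.card_le_card (Finset.subset_univ S)
              simpa using this
        have hTN : #T ≤ N := by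
          have := Finset.card_le_card (Finset.subset_univ T)
          simpa using this
        have hSiT : S ∩ T = T ∩ S := Finset.inter_comm S T
        rw [hSiT, ← hdisj]
        have hexp : N - (#(T ∩ S) + #(T \ S)) = (m - #(T ∩ S)) + ((N - m) - #(T \ S)) := by
          omega
        rw [hexp, pow_add, pow_add]
        ring
    rw [hsplit, Finset.sum_product]
    have hinner : ∀ A : Finset (Fin N),
        ∑ B ∈ Sᶜ.powerset,
          (p ^ A.card * q ^ (m - A.card) *
            (if ((A.card : ZMod n) = 0) then (1:ℝ) else 0)) *
          (p ^ B.card * q ^ ((N - m) - B.card))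
        = (p ^ A.card * q ^ (m - A.card) *
            (if ((A.card : ZMod n) = 0) then (1:ℝ) else 0)) := by
      intro A
      rw [← Finset.mul_sum]
      have hScm : Sᶜ.card = N - m := by
        rw [Finset.card_compl, Fintype.card_fin, hS]
      have : ∑ B ∈ Sᶜ.powerset, p ^ B.card * q ^ ((N - m) - B.card) = 1 := by
        rw [Finset.sum_powerset_apply_card (fun t => p ^ t * q ^ ((N - m) - t)), hScm]
        have hpq : ((p + q) : ℝ) ^ (N - m) = 1 := by
          rw [hq]
          norm_num
        rw [← hpq, add_pow]
        refine Finset.sum_congr rfl fun t ht => ?_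
        have htle : t ≤ N - m := by
          rw [Finset.mem_range] at ht
          omega
        rw [nsmul_eq_mul]
        ring
      rw [this, mul_one]
    rw [Finset.sum_congr rfl (fun A _ => hinner A)]
    rw [Finset.sum_powerset_apply_card
      (fun t => p ^ t * q ^ (m - t) * (if ((t : ZMod n) = 0) then (1:ℝ) else 0)), hS]
    rw [hQdef]
    refine Finset.sum_congr rfl fun t _ => ?_
    rw [nsmul_eq_mul]
    by_cases hd : n ∣ t
    · rw [if_pos ((ZMod.natCast_eq_zero_iff t n).2 hd), if_pos hd]
      ring
    · rw [if_neg (fun hc => hd ((ZMod.natCast_eq_zero_iff t n).1 hc)), if_neg hd]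
      ring
  have hχnn : ∀ (S : Finset (Fin N)) (ω : Fin N → Fin r → Bool), 0 ≤ χ S ω := by
    intro S ω
    simp only [hχ]
    split <;> norm_num
  have hmain : (1:ℝ) ≤ ((Finset.powersetCard m (Finset.univ : Finset (Fin N))).card) * Q ^ r := by
    calc (1:ℝ) = ∑ ω : Fin N → Fin r → Bool, W ω := step1.symm
      _ ≤ ∑ ω : Fin N → Fin r → Bool,
            ∑ S ∈ Finset.powersetCard m Finset.univ, W ω * χ S ω := by
          refine Finset.sum_le_sum fun ω _ => ?_
          obtain ⟨S₀, hc, hzero⟩ := H (fun j i => z (ω j i))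
          have hmem : S₀ ∈ Finset.powersetCard m (Finset.univ : Finset (Fin N)) :=
            Finset.mem_powersetCard.2 ⟨Finset.subset_univ _, hc⟩
          have hχ1 : χ S₀ ω = 1 := by
            simp only [hχ]
            rw [if_pos hzero]
          have heq : W ω = W ω * χ S₀ ω := by rw [hχ1, mul_one]
          exact le_trans (le_of_eq heq)
            (Finset.single_le_sum (fun S _ => mul_nonneg (hW0 ω) (hχnn S ω)) hmem)
      _ = ∑ S ∈ Finset.powersetCard m Finset.univ,
            ∑ ω : Fin N → Fin r → Bool, W ω * χ S ω := Finset.sum_comm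
      _ = ∑ S ∈ Finset.powersetCard m (Finset.univ : Finset (Fin N)), Q ^ r :=
          Finset.sum_congr rfl fun S hSm => step2 S (Finset.mem_powersetCard.1 hSm).2
      _ = ((Finset.powersetCard m (Finset.univ : Finset (Fin N))).card) * Q ^ r := by
          rw [Finset.sum_const, nsmul_eq_mul]
  have hcard : (Finset.powersetCard m (Finset.univ : Finset (Fin N))).card = N.choose m := by
    rw [Finset.card_powersetCard, Finset.card_univ, Fintype.card_fin]
  rw [hcard] at hmain
  exact hmain

private lemma card_multiples (k n : ℕ) (hn : 1 ≤ n) :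
    ((Finset.range (k*n+1)).filter (fun t => n ∣ t)).card = k + 1 := by
  have himg : (Finset.range (k*n+1)).filter (fun t => n ∣ t)
      = (Finset.range (k+1)).image (fun s => s * n) := by
    ext t
    simp only [Finset.mem_filter, Finset.mem_range, Finset.mem_image]
    constructor
    · rintro ⟨h1, s, rfl⟩
      refine ⟨s, ?_, mul_comm s n⟩
      have : n * s ≤ k * n := by omega
      have : s ≤ k := by
        rw [mul_comm k n] at this
        exact Nat.le_of_mul_le_mul_left this (by omega)
      omega
    · rintro ⟨s, hs, rfl⟩
      constructor
      · have : s * n ≤ k * n := Nat.mul_le_mul_right n (by omega)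
        omega
      · exact ⟨s, mul_comm s n⟩
  rw [himg, Finset.card_image_of_injective _
    (fun a b hab => Nat.eq_of_mul_eq_mul_right (by omega) hab), Finset.card_range]

private lemma Q_le (k n : ℕ) (hk : 3 ≤ k) (hn : 1 ≤ n) :
    ∑ t ∈ Finset.range (k*n+1),
      (if n ∣ t then ((k*n).choose t : ℝ) * (1/(Real.exp 1 * k + 1))^t *
        (1 - 1/(Real.exp 1 * k + 1))^(k*n-t) else 0)
    ≤ ((k:ℝ)+1) * (1 - 1/(Real.exp 1 * k + 1))^(k*n) := by
  set E := Real.exp 1 with hE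
  have hE1 : 1 ≤ E := Real.one_le_exp (by norm_num)
  have hk0 : (0:ℝ) < k := by
    have : (3:ℝ) ≤ k := by exact_mod_cast hk
    linarith
  have hEk : (0:ℝ) < E * k := by nlinarith
  set p : ℝ := 1/(E * k + 1) with hp
  have hp0 : 0 < p := by positivity
  have hq : 1 - p = E * k * p := by
    rw [hp]
    field_simp
    ring
  have hq0 : 0 ≤ 1 - p := by nlinarith
  have hterm : ∀ t ∈ Finset.range (k*n+1),
      (if n ∣ t then ((k*n).choose t : ℝ) * p^t * (1-p)^(k*n-t) else 0)
      ≤ (if n ∣ t then (1-p)^(k*n) else 0) := by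
    intro t ht
    by_cases hd : n ∣ t
    · rw [if_pos hd, if_pos hd]
      have htle : t ≤ k * n := by
        rw [Finset.mem_range] at ht
        omega
      have hchoose : ((k*n).choose t : ℝ) ≤ (E * k)^t := by
        rcases Nat.eq_zero_or_pos t with h0 | hpos
        · subst h0
          simp
        · have hnt : n ≤ t := Nat.le_of_dvd hpos hd
          have h1 : ((k*n).choose t : ℝ) ≤ ((k*n : ℕ):ℝ)^t / (t.factorial : ℝ) :=
            Nat.choose_le_pow_div t (k*n)
          have h2 : ((k*n : ℕ):ℝ)^t ≤ (E*k)^t * (t.factorial : ℝ) := by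
            have hkn : ((k*n : ℕ):ℝ)^t = (k:ℝ)^t * ((n:ℕ):ℝ)^t := by
              push_cast
              rw [mul_pow]
            rw [hkn]
            have hnt' : ((n:ℕ):ℝ)^t ≤ ((t:ℕ):ℝ)^t := by
              apply pow_le_pow_left₀ (by positivity)
              exact_mod_cast hnt
            have h3 : ((t:ℕ):ℝ)^t ≤ E^t * (t.factorial : ℝ) := pow_self_le_exp_factorial t
            calc (k:ℝ)^t * ((n:ℕ):ℝ)^t ≤ (k:ℝ)^t * (((t:ℕ):ℝ)^t) := by
                  apply mul_le_mul_of_nonneg_left hnt' (by positivity)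
              _ ≤ (k:ℝ)^t * (E^t * (t.factorial : ℝ)) := by
                  apply mul_le_mul_of_nonneg_left h3 (by positivity)
              _ = (E*k)^t * (t.factorial : ℝ) := by
                  rw [mul_pow]
                  ring
          calc ((k*n).choose t : ℝ) ≤ ((k*n : ℕ):ℝ)^t / (t.factorial : ℝ) := h1
            _ ≤ (E*k)^t := by
                rw [div_le_iff₀ (by exact_mod_cast t.factorial_pos)]
                exact h2
      calc ((k*n).choose t : ℝ) * p^t * (1-p)^(k*n-t)
          ≤ (E*k)^t * p^t * (1-p)^(k*n-t) := by
            apply mul_le_mul_of_nonneg_right _ (by positivity)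
            apply mul_le_mul_of_nonneg_right hchoose (by positivity)
        _ = (1-p)^t * (1-p)^(k*n-t) := by
            rw [← mul_pow, ← hq]
        _ = (1-p)^(k*n) := by
            rw [← pow_add]
            congr 1
            omega
    · rw [if_neg hd, if_neg hd]
  calc ∑ t ∈ Finset.range (k*n+1),
        (if n ∣ t then ((k*n).choose t : ℝ) * p^t * (1-p)^(k*n-t) else 0)
      ≤ ∑ t ∈ Finset.range (k*n+1), (if n ∣ t then (1-p)^(k*n) else 0) :=
        Finset.sum_le_sum hterm
    _ = ((k:ℝ)+1) * (1-p)^(k*n) := by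
        rw [← Finset.sum_filter, Finset.sum_const, card_multiples k n hn,
          nsmul_eq_mul]
        push_cast
        ring

private lemma final_bound (k n r : ℕ) (hk : 3 ≤ k) (hn : 1 ≤ n) (N : ℕ)
    (hN : (N:ℝ) ≤ ((k:ℝ) * (n:ℝ) / 4) *
      ((1 + 1/(Real.exp 1 * (k:ℝ))) * ((k:ℝ)+1) ^ (-(1:ℝ)/((k:ℝ)*(n:ℝ))))^r)
    (hcontr : (1:ℝ) ≤ (N.choose (k*n)) *
      (((k:ℝ)+1) * (1 - 1/(Real.exp 1 * (k:ℝ) + 1))^(k*n))^r) : False := by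
  set E := Real.exp 1 with hE
  set m := k * n with hm
  have hm0 : 0 < m := Nat.mul_pos (by omega) (by omega)
  have hk0 : (0:ℝ) < k := by
    have : (3:ℝ) ≤ k := by exact_mod_cast hk
    linarith
  have hn0 : (0:ℝ) < n := by
    have : (1:ℝ) ≤ n := by exact_mod_cast hn
    linarith
  have hmR : ((m:ℕ):ℝ) = (k:ℝ) * n := by
    rw [hm]
    push_cast
    ring
  have hE1 : 1 ≤ E := Real.one_le_exp (by norm_num)
  have hE0 : 0 < E := by linarith
  set b : ℝ := 1 + 1/(E * (k:ℝ)) with hb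
  set p : ℝ := 1/(E * (k:ℝ) + 1) with hp
  have hEk : (0:ℝ) < E * k := by positivity
  have hbpos : 0 < b := by positivity
  have hq0 : (0:ℝ) ≤ 1 - p := by
    rw [hp]
    have h1 : 1/(E*(k:ℝ)+1) ≤ 1 := by
      rw [div_le_one (by linarith)]
      linarith
    linarith
  have hbq : b * (1 - p) = 1 := by
    rw [hb, hp]
    field_simp
    ring
  set c : ℝ := ((k:ℝ)+1) ^ (-(1:ℝ)/((k:ℝ)*(n:ℝ))) with hc
  have hcpos : 0 < c := Real.rpow_pos_of_pos (by positivity) _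
  set x : ℝ := ((k:ℝ) * (n:ℝ) / 4) * (b * c)^r with hx
  have hxpos : (0:ℝ) ≤ x := by positivity
  have hcrm : c ^ (r * m) = (((k:ℝ)+1)^r)⁻¹ := by
    rw [hc, ← Real.rpow_natCast (((k:ℝ)+1) ^ (-(1:ℝ)/((k:ℝ)*(n:ℝ)))) (r*m),
      ← Real.rpow_mul (by positivity)]
    have hexp : (-(1:ℝ)/((k:ℝ)*(n:ℝ))) * (((r*m : ℕ)):ℝ) = -(r:ℝ) := by
      rw [hm]
      push_cast
      field_simp
    rw [hexp, Real.rpow_neg (by positivity), Real.rpow_natCast]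
  have hfact : (1:ℝ)/(m.factorial:ℝ) ≤ E^m/((m:ℕ):ℝ)^m := by
    rw [div_le_div_iff₀ (by exact_mod_cast m.factorial_pos) (by positivity)]
    calc (1:ℝ) * ((m:ℕ):ℝ)^m = ((m:ℕ):ℝ)^m := one_mul _
      _ ≤ E^m * (m.factorial:ℝ) := pow_self_le_exp_factorial m
  have hchoose : (N.choose m : ℝ) ≤ x^m * (E^m/((m:ℕ):ℝ)^m) := by
    calc (N.choose m : ℝ) ≤ ((N:ℝ))^m / (m.factorial : ℝ) := by
          have := Nat.choose_le_pow_div (α := ℝ) m N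
          simpa using this
      _ = ((N:ℝ))^m * ((1:ℝ)/(m.factorial:ℝ)) := by ring
      _ ≤ x^m * (E^m/((m:ℕ):ℝ)^m) := by
          apply mul_le_mul (pow_le_pow_left₀ (N.cast_nonneg) hN m) hfact
            (by positivity) (by positivity)
  have e1 : b^(r*m) * (1-p)^(m*r) = 1 := by
    rw [mul_comm m r, ← mul_pow, hbq, one_pow]
  have e2 : ((((k:ℝ)+1)^r)⁻¹) * (((k:ℝ)+1)^r) = 1 := inv_mul_cancel₀ (by positivity)
  have e3 : ((k:ℝ)*(n:ℝ)/4)^m * (E^m/((m:ℕ):ℝ)^m) = (E/4)^m := by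
    rw [← hmR, div_pow, div_pow]
    have hmm : (((m:ℕ):ℝ)^m) ≠ 0 := by positivity
    field_simp
  have hfin : (1:ℝ) ≤ (E/4)^m := by
    calc (1:ℝ) ≤ (N.choose m : ℝ) * (((k:ℝ)+1) * (1-p)^m)^r := hcontr
      _ ≤ (x^m * (E^m/((m:ℕ):ℝ)^m)) * (((k:ℝ)+1) * (1-p)^m)^r := by
          apply mul_le_mul_of_nonneg_right hchoose
          apply pow_nonneg
          positivity
      _ = (((k:ℝ)*(n:ℝ)/4)^m * (E^m/((m:ℕ):ℝ)^m)) * ((b^(r*m) * (1-p)^(m*r)) *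
            ((((k:ℝ)+1)^r)⁻¹ * (((k:ℝ)+1)^r))) := by
          rw [hx, mul_pow ((k:ℝ)*(n:ℝ)/4) ((b*c)^r) m, ← pow_mul (b*c) r m,
            mul_pow b c (r*m), hcrm, mul_pow ((k:ℝ)+1) ((1-p)^m) r,
            ← pow_mul (1-p) m r]
          ring
      _ = (E/4)^m := by
          rw [e1, e2, mul_one, mul_one, e3]
  have hlt : (E/4)^m < 1 := by
    apply pow_lt_one₀ (by positivity) _ (by omega)
    rw [div_lt_one (by norm_num)]
    have := Real.exp_one_lt_d9
    rw [hE]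
    linarith
  linarith

theorem egz_lower_bound_general_explicit (k n r : ℕ) (hk : 3 ≤ k) (hn : 1 ≤ n) (hr : 1 ≤ r) :
    ∃ X : Fin (⌊(k * n / 4 : ℝ) *
          ((1 + 1 / (Real.exp 1 * k)) * ((k : ℝ) + 1) ^ (-(1 : ℝ) / (k * n))) ^ r⌋₊) →
        (Fin r → ZMod n),
      ∀ S : Finset (Fin (⌊(k * n / 4 : ℝ) *
          ((1 + 1 / (Real.exp 1 * k)) * ((k : ℝ) + 1) ^ (-(1 : ℝ) / (k * n))) ^ r⌋₊)),
        S.card = k * n → ∑ j ∈ S, X j ≠ 0 := by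
  by_contra hcon
  push_neg at hcon
  haveI : NeZero n := ⟨by omega⟩
  have hE1 : (1:ℝ) ≤ Real.exp 1 := Real.one_le_exp (by norm_num)
  have hk0 : (3:ℝ) ≤ (k:ℝ) := by exact_mod_cast hk
  have hp0 : (0:ℝ) ≤ 1/(Real.exp 1 * (k:ℝ) + 1) := by positivity
  have hp1 : 1/(Real.exp 1 * (k:ℝ) + 1) ≤ 1 := by
    rw [div_le_one (by nlinarith)]
    nlinarith
  have h1 := first_moment n (k*n) r _ (1/(Real.exp 1 * (k:ℝ) + 1)) hp0 hp1 hcon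
  have h2 := Q_le k n hk hn
  have hq0 : (0:ℝ) ≤ 1 - 1/(Real.exp 1 * (k:ℝ) + 1) := by linarith
  have hQnn : (0:ℝ) ≤ ∑ t ∈ Finset.range (k*n+1),
      (if n ∣ t then ((k*n).choose t : ℝ) * (1/(Real.exp 1 * (k:ℝ) + 1))^t *
        (1 - 1/(Real.exp 1 * (k:ℝ) + 1))^(k*n-t) else 0) := by
    refine Finset.sum_nonneg fun t _ => ?_
    by_cases hd : n ∣ t
    · rw [if_pos hd]
      apply mul_nonneg (mul_nonneg (by positivity) (by positivity)) (pow_nonneg hq0 _)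
    · rw [if_neg hd]
  have h3 : (1:ℝ) ≤ (Nat.choose (⌊(k * n / 4 : ℝ) *
          ((1 + 1 / (Real.exp 1 * k)) * ((k : ℝ) + 1) ^ (-(1 : ℝ) / (k * n))) ^ r⌋₊) (k*n)) *
      (((k:ℝ)+1) * (1 - 1/(Real.exp 1 * (k:ℝ) + 1))^(k*n))^r :=
    le_trans h1 (mul_le_mul_of_nonneg_left (pow_le_pow_left₀ hQnn h2 r) (by positivity))
  have hN : ((⌊(k * n / 4 : ℝ) *
          ((1 + 1 / (Real.exp 1 * k)) * ((k : ℝ) + 1) ^ (-(1 : ℝ) / (k * n))) ^ r⌋₊ : ℕ) : ℝ)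
      ≤ ((k:ℝ) * (n:ℝ) / 4) *
        ((1 + 1/(Real.exp 1 * (k:ℝ))) * ((k:ℝ)+1) ^ (-(1:ℝ)/((k:ℝ)*(n:ℝ))))^r :=
    Nat.floor_le (by positivity)
  exact final_bound k n r hk hn _ hN h3
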